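/- With the particular choice a(x, c_1, …, c_N) := (1/N) Σ_{j=1}^N e^{ψ(f(x), g₋(c_j))}, the averaged multi-sample NWJ expression satisfies the exact identity (1/N) Σ_{i=1}^N ( 1 + E_{P_i}[ ψ(f(X), g₊(C_i)) − log a(X, C_1, …, C_N) ] − E_Q[ e^{ψ(f(X), g₊(C_i))} / a(X, C_1, …, C_N) ] ) = 1 + log N − I_NCE^{self-p} − R, provided all expectations involved are finite. -/

import Mathlib

open MeasureTheory ProbabilityTheory Filter
open scoped Classical ENNReal Topology

/-- The Kullback–Leibler divergence `KL(P‖Q) = ∫ log (dP/dQ) dP`, with value `+∞`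
when `P` is not absolutely continuous with respect to `Q` (or the integral is undefined). -/
noncomputable def klDivergence {Ω : Type*} [MeasurableSpace Ω] (P Q : Measure Ω) : EReal :=
  if P ≪ Q ∧ Integrable (fun ω => Real.log ((P.rnDeriv Q ω).toReal)) P
  then ((∫ ω, Real.log ((P.rnDeriv Q ω).toReal) ∂P : ℝ) : EReal)
  else ⊤

/-- The mutual information `I(X;C) := KL(law(X,C) ‖ law(X) ⊗ law(C))`. -/
noncomputable def mutualInfo {Ω 𝓧 𝒞 : Type*} [MeasurableSpace Ω] [MeasurableSpace 𝓧]
    [MeasurableSpace 𝒞] (μ : Measure Ω) (X : Ω → 𝓧) (C : Ω → 𝒞) : EReal :=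
  klDivergence (μ.map (fun ω => (X ω, C ω))) ((μ.map X).prod (μ.map C))

/-- The conditional law of `X` given `C = c`. -/
noncomputable def condLaw {Ω 𝓧 𝒞 : Type*} [MeasurableSpace Ω] [MeasurableSpace 𝓧]
    [MeasurableSpace 𝒞] (μ : Measure Ω) (X : Ω → 𝓧) (C : Ω → 𝒞) (c : 𝒞) : Measure 𝓧 :=
  (μ[|C ⁻¹' {c}]).map X

/-- The law `P_i` of `(X, (C_1, …, C_N))` under which `C_1, …, C_N` are i.i.d. copies of `C`
and `X` is drawn from the conditional law of `X` given `C = C_i`, conditionally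
independently of the other `C_j`. -/
noncomputable def Pmeas {Ω 𝓧 𝒞 : Type*} [MeasurableSpace Ω] [MeasurableSpace 𝓧]
    [MeasurableSpace 𝒞] (μ : Measure Ω) (X : Ω → 𝓧) (C : Ω → 𝒞) (N : ℕ) (i : Fin N) :
    Measure (𝓧 × (Fin N → 𝒞)) :=
  (Measure.pi fun _ : Fin N => μ.map C).bind
    (fun cs => (condLaw μ X C (cs i)).map (fun x => (x, cs)))

/-- The law `Q` of `(X, (C_1, …, C_N))` under which `X` has the marginal law of `X` and is
independent of `C_1, …, C_N`, which are i.i.d. copies of `C`. -/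
noncomputable def Qmeas {Ω 𝓧 𝒞 : Type*} [MeasurableSpace Ω] [MeasurableSpace 𝓧]
    [MeasurableSpace 𝒞] (μ : Measure Ω) (X : Ω → 𝓧) (C : Ω → 𝒞) (N : ℕ) :
    Measure (𝓧 × (Fin N → 𝒞)) :=
  (μ.map X).prod (Measure.pi fun _ : Fin N => μ.map C)

theorem test : True := trivial

/-- key algebraic identity in the proof of Proposition 1:
with `a(x, c₁, …, c_N) := (1/N) Σ_j e^{ψ(f(x), g₋(c_j))}`, the averaged multi-sample NWJ
expression equals `1 + log N − I_NCE^{self-p} − R`. -/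
theorem stmt_3 {Ω 𝓧 : Type*} [MeasurableSpace Ω] [MeasurableSpace 𝓧]
    {M dz : ℕ} (μ : Measure Ω) [IsProbabilityMeasure μ]
    (X : Ω → 𝓧) (C : Ω → Fin M) (hX : Measurable X) (hC : Measurable C)
    (hpos : ∀ c : Fin M, 0 < μ (C ⁻¹' {c}))
    (N : ℕ) (hN : 1 ≤ N)
    (f : 𝓧 → EuclideanSpace ℝ (Fin dz)) (hf : Measurable f)
    (gp gm : Fin M → EuclideanSpace ℝ (Fin dz))
    (ψ : EuclideanSpace ℝ (Fin dz) → EuclideanSpace ℝ (Fin dz) → ℝ)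
    (hψ : Measurable (fun p : EuclideanSpace ℝ (Fin dz) × EuclideanSpace ℝ (Fin dz) =>
      ψ p.1 p.2))
    (a : 𝓧 → (Fin N → Fin M) → ℝ)
    (ha : ∀ x cs, a x cs = (1 / N) * ∑ j : Fin N, Real.exp (ψ (f x) (gm (cs j))))
    (hintP : ∀ i : Fin N, Integrable (fun p : 𝓧 × (Fin N → Fin M) =>
      ψ (f p.1) (gp (p.2 i)) - Real.log (a p.1 p.2)) (Pmeas μ X C N i))
    (hintQ : ∀ i : Fin N, Integrable (fun p : 𝓧 × (Fin N → Fin M) =>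
      Real.exp (ψ (f p.1) (gp (p.2 i))) / a p.1 p.2) (Qmeas μ X C N)) :
    (1 / N) * ∑ i : Fin N,
      (1 + (∫ p, (ψ (f p.1) (gp (p.2 i)) - Real.log (a p.1 p.2)) ∂(Pmeas μ X C N i))
         - ∫ p, Real.exp (ψ (f p.1) (gp (p.2 i))) / a p.1 p.2 ∂(Qmeas μ X C N))
    = 1 + Real.log N
        - (1 / N) * ∑ i : Fin N, ∫ p, -Real.log (Real.exp (ψ (f p.1) (gp (p.2 i))) /
            ∑ j : Fin N, Real.exp (ψ (f p.1) (gm (p.2 j)))) ∂(Pmeas μ X C N i)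
        - ∫ p, (∑ k : Fin N, Real.exp (ψ (f p.1) (gp (p.2 k)))) /
            (∑ k : Fin N, Real.exp (ψ (f p.1) (gm (p.2 k)))) ∂(Qmeas μ X C N) := by
  classical
  haveI : NeZero N := ⟨by omega⟩
  have hNpos : (0:ℝ) < N := by exact_mod_cast Nat.pos_of_ne_zero (by omega)
  have hNne : (N:ℝ) ≠ 0 := ne_of_gt hNpos
  -- Q is a probability measure
  haveI hQprob : IsProbabilityMeasure (Qmeas μ X C N) := by
    haveI : IsProbabilityMeasure (μ.map X) := Measure.isProbabilityMeasure_map hX.aemeasurable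
    haveI : IsProbabilityMeasure (Measure.pi fun _ : Fin N => μ.map C) := by
      haveI : ∀ _ : Fin N, IsProbabilityMeasure (μ.map C) :=
        fun _ => Measure.isProbabilityMeasure_map hC.aemeasurable
      infer_instance
    unfold Qmeas; infer_instance
  -- each P_i is a probability measure
  haveI hPprob : ∀ i : Fin N, IsProbabilityMeasure (Pmeas μ X C N i) := by
    intro i
    constructor
    have hker : Measurable (fun cs : Fin N → Fin M =>
        (condLaw μ X C (cs i)).map (fun x => (x, cs))) := measurable_of_countable _
    rw [Pmeas, Measure.bind_apply MeasurableSet.univ hker.aemeasurable]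
    have h1 : ∀ cs : Fin N → Fin M,
        ((condLaw μ X C (cs i)).map (fun x => (x, cs))) Set.univ = 1 := by
      intro cs
      haveI : IsProbabilityMeasure (condLaw μ X C (cs i)) := by
        unfold condLaw
        haveI := ProbabilityTheory.cond_isProbabilityMeasure (μ := μ)
          (s := C ⁻¹' {cs i}) (hpos (cs i)).ne'
        exact Measure.isProbabilityMeasure_map hX.aemeasurable
      haveI : IsProbabilityMeasure ((condLaw μ X C (cs i)).map (fun x => (x, cs))) :=
        Measure.isProbabilityMeasure_map (measurable_id.prodMk measurable_const).aemeasurable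
      exact measure_univ
    simp only [h1]
    haveI : IsProbabilityMeasure (Measure.pi fun _ : Fin N => μ.map C) := by
      haveI : ∀ _ : Fin N, IsProbabilityMeasure (μ.map C) :=
        fun _ => Measure.isProbabilityMeasure_map hC.aemeasurable
      infer_instance
    simp
  -- positivity of the denominator sum
  have hS : ∀ p : 𝓧 × (Fin N → Fin M),
      0 < ∑ j : Fin N, Real.exp (ψ (f p.1) (gm (p.2 j))) := by
    intro p
    exact Finset.sum_pos (fun j _ => Real.exp_pos _) ⟨⟨0, by omega⟩, Finset.mem_univ _⟩
  -- pointwise identity on the P side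
  have hpt : ∀ (i : Fin N) (p : 𝓧 × (Fin N → Fin M)),
      ψ (f p.1) (gp (p.2 i)) - Real.log (a p.1 p.2)
        = Real.log N - (-Real.log (Real.exp (ψ (f p.1) (gp (p.2 i))) /
            ∑ j : Fin N, Real.exp (ψ (f p.1) (gm (p.2 j))))) := by
    intro i p
    rw [ha, Real.log_mul (by simp [hNne]) (hS p).ne',
      Real.log_div (Real.exp_ne_zero _) (hS p).ne', Real.log_exp, one_div,
      Real.log_inv]
    ring
  -- P-side integral identity
  have hPint : ∀ i : Fin N,
      ∫ p, (ψ (f p.1) (gp (p.2 i)) - Real.log (a p.1 p.2)) ∂(Pmeas μ X C N i)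
        = Real.log N - ∫ p, -Real.log (Real.exp (ψ (f p.1) (gp (p.2 i))) /
            ∑ j : Fin N, Real.exp (ψ (f p.1) (gm (p.2 j)))) ∂(Pmeas μ X C N i) := by
    intro i
    have hg : Integrable (fun p : 𝓧 × (Fin N → Fin M) =>
        -Real.log (Real.exp (ψ (f p.1) (gp (p.2 i))) /
          ∑ j : Fin N, Real.exp (ψ (f p.1) (gm (p.2 j))))) (Pmeas μ X C N i) := by
      refine ((integrable_const (Real.log N)).sub (hintP i)).congr ?_
      filter_upwards with p
      simp only [Pi.sub_apply]
      rw [hpt i p]; ring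
    rw [integral_congr_ae (ae_of_all _ (hpt i)), integral_sub (integrable_const _) hg,
      integral_const]
    simp
  -- Q-side pointwise identity
  have hqt : ∀ p : 𝓧 × (Fin N → Fin M),
      ∑ i : Fin N, Real.exp (ψ (f p.1) (gp (p.2 i))) / a p.1 p.2
        = (N : ℝ) * ((∑ k : Fin N, Real.exp (ψ (f p.1) (gp (p.2 k)))) /
            (∑ k : Fin N, Real.exp (ψ (f p.1) (gm (p.2 k))))) := by
    intro p
    rw [← Finset.sum_div]
    rw [ha]
    field_simp
  -- Q-side integral identity
  have hQint : ∑ i : Fin N, ∫ p, Real.exp (ψ (f p.1) (gp (p.2 i))) / a p.1 p.2 ∂(Qmeas μ X C N)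
      = (N : ℝ) * ∫ p, (∑ k : Fin N, Real.exp (ψ (f p.1) (gp (p.2 k)))) /
          (∑ k : Fin N, Real.exp (ψ (f p.1) (gm (p.2 k)))) ∂(Qmeas μ X C N) := by
    rw [← integral_finset_sum _ (fun i _ => hintQ i),
      integral_congr_ae (ae_of_all _ hqt), integral_const_mul]
  -- combine everything
  simp only [hPint]
  rw [Finset.sum_sub_distrib, Finset.sum_add_distrib, hQint,
    Finset.sum_sub_distrib, Finset.sum_const, Finset.card_univ, Fintype.card_fin,
    Finset.sum_const, Finset.card_univ, Fintype.card_fin]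
  push_cast
  field_simp
  ring
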